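/- Suppose A ↣ B ↠ C is an extension of complete, torsionfree bornological V-algebras such that GL(B)' → GL(C)' is surjective. Then there is an exact sequence KV_1^an(A) → KV_1^an(B) → KV_1^an(C) → K_0(A) → K_0(B) → K_0(C), where the connecting map KV_1^an(C) → K_0(A) is induced by the K-theory index map on K_1(C). -/
import Mathlib


/-- Suppose `A ↣ B ↠ C` is an extension of complete, torsionfree
bornological `V`-algebras such that `GL(B)' → GL(C)'` is surjective.  Writing
`K₁, K₀` for the algebraic K-groups (with their half-exact excision sequence
`K₁(A) → K₁(B) → K₁(C) →d K₀(A) → K₀(B) → K₀(C)`), `KV₁^an(X)` for the analytic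
Karoubi–Villamayor group, `q_X : K₁(X) ↠ KV₁^an(X)` for the natural surjections, and
`kvAB, kvBC` for the induced maps, the surjectivity of `GL(B)' → GL(C)'` is encoded by
the hypothesis `hGL`.  Then there is an exact sequence
`KV₁^an(A) → KV₁^an(B) → KV₁^an(C) →δ K₀(A) → K₀(B) → K₀(C)` whose connecting map `δ`
is induced by the K-theory index map `d` on `K₁(C)` (i.e. `δ ∘ q_C = d`). -/
theorem stmt17 {K1A K1B K1C K0A K0B K0C KV1A KV1B KV1C : Type}
    [AddCommGroup K1A] [AddCommGroup K1B] [AddCommGroup K1C]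
    [AddCommGroup K0A] [AddCommGroup K0B] [AddCommGroup K0C]
    [AddCommGroup KV1A] [AddCommGroup KV1B] [AddCommGroup KV1C]
    (a1 : K1A →+ K1B) (b1 : K1B →+ K1C) (d : K1C →+ K0A)
    (a0 : K0A →+ K0B) (b0 : K0B →+ K0C)
    -- the K-theory excision sequence is exact
    (hex1 : Function.Exact a1 b1) (hex2 : Function.Exact b1 d)
    (hex3 : Function.Exact d a0) (hex4 : Function.Exact a0 b0)
    -- the natural surjections `K₁ ↠ KV₁^an` and the induced maps on `KV₁^an`
    (qA : K1A →+ KV1A) (qB : K1B →+ KV1B) (qC : K1C →+ KV1C)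
    (hqA : Function.Surjective qA) (hqB : Function.Surjective qB)
    (hqC : Function.Surjective qC)
    (kvAB : KV1A →+ KV1B) (kvBC : KV1B →+ KV1C)
    (hnat1 : ∀ x : K1A, kvAB (qA x) = qB (a1 x))
    (hnat2 : ∀ x : K1B, kvBC (qB x) = qC (b1 x))
    -- `GL(B)' → GL(C)'` is surjective
    (hGL : ∀ z : K1C, qC z = 0 → ∃ y : K1B, qB y = 0 ∧ b1 y = z) :
    ∃ δ : KV1C →+ K0A,
      (∀ z : K1C, δ (qC z) = d z) ∧
      Function.Exact kvAB kvBC ∧ Function.Exact kvBC δ ∧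
      Function.Exact δ a0 ∧ Function.Exact a0 b0 := by
  -- if qC z = 0 then d z = 0
  have hd0 : ∀ z : K1C, qC z = 0 → d z = 0 := by
    intro z hz
    obtain ⟨y, hy0, hyz⟩ := hGL z hz
    rw [← hyz]
    exact (hex2 (b1 y)).mpr ⟨y, rfl⟩
  -- δ well-defined on representatives
  classical
  have key : ∀ (x : KV1C) (z : K1C), qC z = x → d z = d ((hqC x).choose) := by
    intro x z hz
    have h : qC (z - (hqC x).choose) = 0 := by
      rw [map_sub, hz, (hqC x).choose_spec, sub_self]
    have := hd0 _ h
    rw [map_sub, sub_eq_zero] at this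
    exact this
  let f : KV1C → K0A := fun x => d ((hqC x).choose)
  have hf : ∀ z : K1C, f (qC z) = d z := fun z => (key _ z rfl).symm
  have hadd : ∀ x y : KV1C, f (x + y) = f x + f y := by
    intro x y
    obtain ⟨zx, hx⟩ := hqC x
    obtain ⟨zy, hy⟩ := hqC y
    have : qC (zx + zy) = x + y := by rw [map_add, hx, hy]
    rw [← hx, ← hy, ← map_add, hf, map_add, hf, hf]
  refine ⟨⟨⟨f, ?_⟩, hadd⟩, hf, ?_, ?_, ?_, hex4⟩
  · have : qC (0 : K1C) = 0 := map_zero _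
    rw [← this, hf, map_zero]
  · -- Exact kvAB kvBC
    intro u
    constructor
    · intro hu
      obtain ⟨y, hy⟩ := hqB u
      rw [← hy, hnat2] at hu
      obtain ⟨y', hy'0, hy'⟩ := hGL _ hu
      have : b1 (y - y') = 0 := by rw [map_sub, hy', sub_self]
      obtain ⟨x, hx⟩ := (hex1 _).mp this
      refine ⟨qA x, ?_⟩
      rw [hnat1, hx, map_sub, hy'0, sub_zero, hy]
    · rintro ⟨v, rfl⟩
      obtain ⟨x, rfl⟩ := hqA v
      rw [hnat1, hnat2]
      have : b1 (a1 x) = 0 := (hex1 _).mpr ⟨x, rfl⟩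
      rw [this, map_zero]
  · -- Exact kvBC δ
    intro u
    constructor
    · intro hu
      obtain ⟨z, rfl⟩ := hqC u
      rw [show (⟨⟨f, _⟩, hadd⟩ : KV1C →+ K0A) (qC z) = f (qC z) from rfl, hf] at hu
      obtain ⟨y, hy⟩ := (hex2 _).mp hu
      exact ⟨qB y, by rw [hnat2, hy]⟩
    · rintro ⟨v, rfl⟩
      obtain ⟨y, rfl⟩ := hqB v
      rw [hnat2]
      show f (qC (b1 y)) = 0
      rw [hf]
      exact (hex2 _).mpr ⟨y, rfl⟩
  · -- Exact δ a0
    intro w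
    constructor
    · intro hw
      obtain ⟨z, hz⟩ := (hex3 _).mp hw
      exact ⟨qC z, by rw [show (⟨⟨f, _⟩, hadd⟩ : KV1C →+ K0A) (qC z) = f (qC z) from rfl, hf, hz]⟩
    · rintro ⟨v, rfl⟩
      obtain ⟨z, rfl⟩ := hqC v
      show a0 (f (qC z)) = 0
      rw [hf]
      exact (hex3 _).mpr ⟨z, rfl⟩
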